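/- Graves's vertex reflection identity: let a1 > a2 > 0, z < 0, and θ₀ ∈ ℝ. Define for j = 1, 2: cos θ_j = (cos θ₀ √(1 - z/a1) - (-1)^j sin θ₀ √(1 - z/a2) √(-z(sin²θ₀/a2 + cos²θ₀/a1))) / (1 - z(sin²θ₀/a2 + cos²θ₀/a1)) and sin θ_j = (sin θ₀ √(1 - z/a2) + (-1)^j cos θ₀ √(1 - z/a1) √(-z(sin²θ₀/a2 + cos²θ₀/a1))) / (1 - z(sin²θ₀/a2 + cos²θ₀/a1)). Then cos²θ_j + sin²θ_j = 1 and the tangency condition cos θ₀ √(1 - z/a1) cos θ_j + sin θ₀ √(1 - z/a2) sin θ_j = 1 holds for j = 1, 2. -/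

import Mathlib

/-- Graves's vertex configuration: the stated formulas for `cos θⱼ`, `sin θⱼ`
define points on the unit circle satisfying the tangency condition. -/
theorem graves_vertex_tangency
    (a1 a2 z θ0 : ℝ) (h12 : a1 > a2) (h2 : a2 > 0) (hz : z < 0)
    (e : ℝ) (he : e = 1 ∨ e = -1)
    (ρ : ℝ) (hρ : ρ = Real.sin θ0 ^ 2 / a2 + Real.cos θ0 ^ 2 / a1)
    (c s : ℝ)
    (hc : c = (Real.cos θ0 * Real.sqrt (1 - z / a1) -
        e * Real.sin θ0 * Real.sqrt (1 - z / a2) * Real.sqrt (-z * ρ)) / (1 - z * ρ))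
    (hs : s = (Real.sin θ0 * Real.sqrt (1 - z / a2) +
        e * Real.cos θ0 * Real.sqrt (1 - z / a1) * Real.sqrt (-z * ρ)) / (1 - z * ρ)) :
    c ^ 2 + s ^ 2 = 1 ∧
      Real.cos θ0 * Real.sqrt (1 - z / a1) * c +
        Real.sin θ0 * Real.sqrt (1 - z / a2) * s = 1 := by
  have h1 : a1 > 0 := lt_trans h2 h12
  have hA : Real.sqrt (1 - z / a1) ^ 2 = 1 - z / a1 := by
    rw [Real.sq_sqrt]
    nlinarith [div_neg_of_neg_of_pos hz h1]
  have hB : Real.sqrt (1 - z / a2) ^ 2 = 1 - z / a2 := by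
    rw [Real.sq_sqrt]
    nlinarith [div_neg_of_neg_of_pos hz h2]
  have hρ0 : 0 ≤ ρ := by rw [hρ]; positivity
  have hR : Real.sqrt (-z * ρ) ^ 2 = -z * ρ := by
    rw [Real.sq_sqrt]
    exact mul_nonneg (by linarith) hρ0
  have he2 : e ^ 2 = 1 := by rcases he with h | h <;> rw [h] <;> norm_num
  have hCS : Real.cos θ0 ^ 2 + Real.sin θ0 ^ 2 = 1 := Real.cos_sq_add_sin_sq θ0
  have hD : 0 < 1 - z * ρ := by nlinarith [mul_nonneg (neg_nonneg.2 hz.le) hρ0]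
  have key : Real.cos θ0 ^ 2 * Real.sqrt (1 - z / a1) ^ 2 +
      Real.sin θ0 ^ 2 * Real.sqrt (1 - z / a2) ^ 2 = 1 - z * ρ := by
    rw [hA, hB, hρ]
    field_simp
    linear_combination (a1 * a2) * hCS
  generalize hAg : Real.sqrt (1 - z / a1) = A at hA hc hs key ⊢
  generalize hBg : Real.sqrt (1 - z / a2) = B at hB hc hs key ⊢
  generalize hRg : Real.sqrt (-z * ρ) = R at hR hc hs ⊢
  subst hc hs
  constructor
  · rw [div_pow, div_pow, ← add_div, div_eq_one_iff_eq (by positivity)]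
    linear_combination (1 + e ^ 2 * R ^ 2) * key + (1 - z * ρ) * R ^ 2 * he2 +
      (1 - z * ρ) * hR
  · rw [← mul_div_assoc, ← mul_div_assoc, ← add_div, div_eq_one_iff_eq hD.ne']
    linear_combination key
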